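/- Let V ⊆ X be an open σ-invariant set, let f_1, …, f_n, g_1, …, g_n ∈ C_c(U), and assume that for some index i either f_i ∈ C_0(V) or g_i ∈ C_0(V). Define h_0 = 1 (the constant function) and, for 1 ≤ j ≤ n, h_j = L(conj(f_j)·h_{j-1}·g_j). Then h_n ∈ C_0(V). -/

import Mathlib

/-- `σ : U → X` is a local homeomorphism. -/
def IsLocalHomeo {X : Type*} [TopologicalSpace X] (σ : X → X) (U : Set X) : Prop :=
  ∀ x ∈ U, ∃ W : Set X, x ∈ W ∧ W ⊆ U ∧ IsOpen W ∧ IsOpen (σ '' W) ∧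
    Set.InjOn σ W ∧ ContinuousOn σ W ∧ ∀ V : Set X, V ⊆ W → IsOpen V → IsOpen (σ '' V)

/-- `f` is a continuous function on `X` with compact support contained in `U`. -/
def MemCc {X : Type*} [TopologicalSpace X] (U : Set X) (f : X → ℂ) : Prop :=
  Continuous f ∧ IsCompact (tsupport f) ∧ tsupport f ⊆ U

/-- The transfer operator: `L f x = ∑_{y ∈ U, σ y = x} f y` (a finite sum for
`f ∈ C_c(U)`; the empty sum, in particular the case `σ⁻¹(x) = ∅`, gives `0`). -/
noncomputable def Lop {X : Type*} [TopologicalSpace X] (σ : X → X) (U : Set X)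
    (f : X → ℂ) : X → ℂ :=
  fun x => ∑ᶠ y ∈ {y : X | y ∈ U ∧ σ y = x}, f y
/-- `f` is continuous on `X` and vanishes at every point of `X \ V`. -/
def MemC0 {X : Type*} [TopologicalSpace X] (V : Set X) (f : X → ℂ) : Prop :=
  Continuous f ∧ ∀ x ∉ V, f x = 0

open Set Function

section Aux

variable {X : Type*} [TopologicalSpace X] [T2Space X] {U : Set X} {σ : X → X}

/-- The intersection of a fiber of `σ` with a compact subset of `U` is finite. -/
lemma fiber_inter_finite (hσ : IsLocalHomeo σ U) {K : Set X} (hK : IsCompact K)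
    (hKU : K ⊆ U) (x : X) : ({y | y ∈ U ∧ σ y = x} ∩ K).Finite := by
  classical
  have hch : ∀ y ∈ K, ∃ W : Set X, y ∈ W ∧ W ⊆ U ∧ IsOpen W ∧ IsOpen (σ '' W) ∧
      Set.InjOn σ W ∧ ContinuousOn σ W ∧ ∀ V : Set X, V ⊆ W → IsOpen V → IsOpen (σ '' V) :=
    fun y hy => hσ y (hKU hy)
  choose! W hyW hWU hWopen hWimg hinj hcont hop using hch
  obtain ⟨b, hbK, hbfin, hcov⟩ := hK.elim_finite_subcover_image
    (fun y hy => hWopen y hy) (fun y hy => Set.mem_biUnion hy (hyW y hy))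
  have hsub : ({y | y ∈ U ∧ σ y = x} ∩ K) ⊆ ⋃ z ∈ b, ({y | y ∈ U ∧ σ y = x} ∩ W z) := by
    rintro y ⟨hy1, hy2⟩
    obtain ⟨z, hz, hyz⟩ := Set.mem_iUnion₂.mp (hcov hy2)
    exact Set.mem_iUnion₂.mpr ⟨z, hz, hy1, hyz⟩
  refine Set.Finite.subset (Set.Finite.biUnion hbfin fun z hz => ?_) hsub
  apply Set.Subsingleton.finite
  rintro y₁ ⟨⟨_, h1⟩, hw1⟩ y₂ ⟨⟨_, h2⟩, hw2⟩
  exact hinj z (hbK hz) hw1 hw2 (h1.trans h2.symm)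

/-- Fiber-support finiteness for a compactly supported function. -/
lemma fiber_support_finite (hσ : IsLocalHomeo σ U) {F : X → ℂ} (hF : MemCc U F) (x : X) :
    ({y | y ∈ U ∧ σ y = x} ∩ Function.support F).Finite :=
  (fiber_inter_finite hσ hF.2.1 hF.2.2 x).subset
    (Set.inter_subset_inter_right _ (subset_tsupport F))

/-- `Lop` distributes over finite sums of functions with fiber-finite support. -/
lemma lop_finset_sum (σ : X → X) (U : Set X) {ι : Type*} (t : Finset ι) (Fs : ι → X → ℂ)
    (hfin : ∀ i ∈ t, ∀ x : X, ({y | y ∈ U ∧ σ y = x} ∩ Function.support (Fs i)).Finite) :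
    Lop σ U (fun y => ∑ i ∈ t, Fs i y) = fun x => ∑ i ∈ t, Lop σ U (Fs i) x := by
  classical
  induction t using Finset.induction_on with
  | empty =>
    funext x
    simp only [Finset.sum_empty]
    exact finsum_mem_of_eqOn_zero fun y _ => rfl
  | @insert a s ha ih =>
    funext x
    have hrest : ∀ i ∈ s, ∀ x : X,
        ({y | y ∈ U ∧ σ y = x} ∩ Function.support (Fs i)).Finite :=
      fun i hi => hfin i (Finset.mem_insert_of_mem hi)
    have h1 : ({y | y ∈ U ∧ σ y = x} ∩ Function.support (Fs a)).Finite :=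
      hfin a (Finset.mem_insert_self a s) x
    have h2 : ({y | y ∈ U ∧ σ y = x} ∩
        Function.support (fun y => ∑ i ∈ s, Fs i y)).Finite := by
      refine Set.Finite.subset (Set.Finite.biUnion s.finite_toSet
        (fun i hi => hrest i hi x)) ?_
      rintro y ⟨hy1, hy2⟩
      simp only [Function.mem_support] at hy2
      obtain ⟨i, hi, hne⟩ : ∃ i ∈ s, Fs i y ≠ 0 := by
        by_contra h
        push_neg at h
        exact hy2 (Finset.sum_eq_zero h)
      exact Set.mem_iUnion₂.mpr ⟨i, hi, hy1, hne⟩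
    simp only [Finset.sum_insert ha]
    calc Lop σ U (fun y => Fs a y + ∑ i ∈ s, Fs i y) x
        = (∑ᶠ y ∈ {y | y ∈ U ∧ σ y = x}, Fs a y) +
          ∑ᶠ y ∈ {y | y ∈ U ∧ σ y = x}, ∑ i ∈ s, Fs i y :=
          finsum_mem_add_distrib' h1 h2
      _ = Lop σ U (Fs a) x + ∑ i ∈ s, Lop σ U (Fs i) x := by
          rw [show (∑ᶠ y ∈ {y | y ∈ U ∧ σ y = x}, ∑ i ∈ s, Fs i y)
              = Lop σ U (fun y => ∑ i ∈ s, Fs i y) x from rfl, ih hrest]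
          rfl

/-- Continuity of `Lop F` when `F` is supported in a single chart. -/
lemma lop_continuous_of_chart [Nonempty X] {F : X → ℂ} (hFc : Continuous F)
    (hK : IsCompact (tsupport F)) {W : Set X} (hWU : W ⊆ U) (hWopen : IsOpen W)
    (himg : IsOpen (σ '' W)) (hinj : Set.InjOn σ W) (hcont : ContinuousOn σ W)
    (hop : ∀ V : Set X, V ⊆ W → IsOpen V → IsOpen (σ '' V))
    (hsupp : tsupport F ⊆ W) : Continuous (Lop σ U F) := by
  classical
  set ρ : X → X := Function.invFunOn σ W with hρ
  have hρmem : ∀ x ∈ σ '' W, ρ x ∈ W := by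
    rintro x ⟨y, hy, rfl⟩
    exact Function.invFunOn_mem ⟨y, hy, rfl⟩
  have hρeq : ∀ x ∈ σ '' W, σ (ρ x) = x := by
    rintro x ⟨y, hy, rfl⟩
    exact Function.invFunOn_eq ⟨y, hy, rfl⟩
  -- continuity of the local inverse
  have hρcont : ContinuousOn ρ (σ '' W) := by
    rw [continuousOn_iff']
    intro O hO
    refine ⟨σ '' (O ∩ W), hop _ Set.inter_subset_right (hO.inter hWopen), ?_⟩
    · ext x
      constructor
      · rintro ⟨hxO, hxW⟩
        refine ⟨⟨ρ x, ⟨hxO, hρmem x hxW⟩, hρeq x hxW⟩, hxW⟩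
      · rintro ⟨⟨y, ⟨hyO, hyW⟩, rfl⟩, hxW⟩
        have h1 : ρ (σ y) ∈ W := hρmem _ ⟨y, hyW, rfl⟩
        have h2 : σ (ρ (σ y)) = σ y := hρeq _ ⟨y, hyW, rfl⟩
        have : ρ (σ y) = y := hinj h1 hyW h2
        exact ⟨by rw [Set.mem_preimage, this]; exact hyO, ⟨y, hyW, rfl⟩⟩
  -- pointwise formulas
  have heq1 : ∀ x ∈ σ '' W, Lop σ U F x = F (ρ x) := by
    intro x hx
    have hmem : ρ x ∈ {y | y ∈ U ∧ σ y = x} := ⟨hWU (hρmem x hx), hρeq x hx⟩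
    have : Lop σ U F x = ∑ᶠ y, Set.indicator {y | y ∈ U ∧ σ y = x} F y :=
      finsum_mem_def _ F
    rw [this, finsum_eq_single _ (ρ x)]
    · simp [Set.indicator_of_mem hmem]
    · intro y hy
      by_cases hyS : y ∈ {y | y ∈ U ∧ σ y = x}
      · rw [Set.indicator_of_mem hyS]
        by_contra hne
        have hyW : y ∈ W := hsupp (subset_tsupport F hne)
        exact hy (hinj hyW (hρmem x hx) (hyS.2.trans (hρeq x hx).symm))
      · exact Set.indicator_of_notMem hyS F
  have himgK : IsCompact (σ '' tsupport F) := hK.image_of_continuousOn (hcont.mono hsupp)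
  have heq2 : ∀ x ∉ σ '' tsupport F, Lop σ U F x = 0 := by
    intro x hx
    refine finsum_mem_of_eqOn_zero fun y hy => ?_
    by_contra hne
    exact hx ⟨y, subset_tsupport F hne, hy.2⟩
  rw [continuous_iff_continuousAt]
  intro x
  by_cases hx : x ∈ σ '' W
  · have h1 : ContinuousAt ρ x := hρcont.continuousAt (himg.mem_nhds hx)
    have h2 : ContinuousAt (fun z => F (ρ z)) x := hFc.continuousAt.comp h1
    refine h2.congr ?_
    filter_upwards [himg.mem_nhds hx] with z hz
    exact (heq1 z hz).symm
  · have hx' : x ∉ σ '' tsupport F := fun h => hx (Set.image_mono hsupp h)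
    have hopen : IsOpen (σ '' tsupport F)ᶜ := himgK.isClosed.isOpen_compl
    have : ContinuousAt (fun _ : X => (0 : ℂ)) x := continuousAt_const
    refine this.congr ?_
    filter_upwards [hopen.mem_nhds hx'] with z hz
    exact (heq2 z hz).symm

/-- Continuity of the transfer operator on `C_c(U)`. -/
lemma lop_continuous [CompactSpace X] (hU : IsOpen U) (hσ : IsLocalHomeo σ U)
    {F : X → ℂ} (hF : MemCc U F) : Continuous (Lop σ U F) := by
  classical
  cases isEmpty_or_nonempty X with
  | inl h => exact continuous_iff_continuousAt.mpr fun x => isEmptyElim x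
  | inr h => ?_
  obtain ⟨hFc, hK, hKU⟩ := hF
  have hch : ∀ y ∈ tsupport F, ∃ W : Set X, y ∈ W ∧ W ⊆ U ∧ IsOpen W ∧ IsOpen (σ '' W) ∧
      Set.InjOn σ W ∧ ContinuousOn σ W ∧ ∀ V : Set X, V ⊆ W → IsOpen V → IsOpen (σ '' V) :=
    fun y hy => hσ y (hKU hy)
  choose! W hyW hWU hWopen hWimg hinj hcont hop using hch
  obtain ⟨b, hbK, hbfin, hcov⟩ := hK.elim_finite_subcover_image
    (fun y hy => hWopen y hy) (fun y hy => Set.mem_biUnion hy (hyW y hy))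
  obtain ⟨m, e, he_inj, he_range⟩ := hbfin.fin_param
  set s : Fin m → Set X := fun i => W (e i) with hs_def
  have hsopen : ∀ i, IsOpen (s i) := by
    intro i
    have : e i ∈ b := he_range ▸ Set.mem_range_self i
    exact hWopen _ (hbK this)
  have hcov' : tsupport F ⊆ ⋃ i, s i := by
    intro y hy
    obtain ⟨z, hz, hyz⟩ := Set.mem_iUnion₂.mp (hcov hy)
    obtain ⟨i, rfl⟩ : ∃ i, e i = z := by
      have : z ∈ Set.range e := he_range ▸ hz
      exact this
    exact Set.mem_iUnion.mpr ⟨i, hyz⟩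
  obtain ⟨p, hpsupp, hpsum, _, _⟩ :=
    exists_continuous_sum_one_of_isOpen_isCompact hsopen hK hcov'
  set Fs : Fin m → X → ℂ := fun i x => (p i x : ℂ) * F x with hFs_def
  have hFs_cont : ∀ i, Continuous (Fs i) := fun i =>
    (Complex.continuous_ofReal.comp (p i).continuous).mul hFc
  have hFs_supp : ∀ i, Function.support (Fs i) ⊆ Function.support F := by
    intro i y hy
    simp only [Function.mem_support, hFs_def] at hy ⊢
    exact fun h => hy (by rw [h, mul_zero])
  have hFs_tsupp : ∀ i, tsupport (Fs i) ⊆ tsupport F := fun i =>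
    closure_mono (hFs_supp i)
  have hFs_tsuppW : ∀ i, tsupport (Fs i) ⊆ s i := by
    intro i
    refine subset_trans (closure_mono ?_) (hpsupp i)
    intro y hy
    simp only [Function.mem_support, hFs_def] at hy
    intro h
    exact hy (by simp [h])
  have hFeq : F = fun y => ∑ i, Fs i y := by
    funext y
    by_cases hy : y ∈ tsupport F
    · have h2 : ∑ i, p i y = (1 : ℝ) := by simpa using hpsum hy
      simp only [hFs_def]
      rw [← Finset.sum_mul, ← Complex.ofReal_sum, h2, Complex.ofReal_one, one_mul]
    · have h0 : F y = 0 := image_eq_zero_of_notMem_tsupport hy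
      simp [hFs_def, h0]
  have hfin : ∀ i ∈ (Finset.univ : Finset (Fin m)), ∀ x : X,
      ({y | y ∈ U ∧ σ y = x} ∩ Function.support (Fs i)).Finite := by
    intro i _ x
    exact (fiber_inter_finite hσ hK hKU x).subset
      (Set.inter_subset_inter_right _ ((hFs_supp i).trans (subset_tsupport F)))
  have : Lop σ U F = fun x => ∑ i, Lop σ U (Fs i) x := by
    rw [hFeq]
    exact lop_finset_sum σ U Finset.univ Fs hfin
  rw [this]
  refine continuous_finset_sum _ fun i _ => ?_
  have hbi : e i ∈ b := he_range ▸ Set.mem_range_self i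
  have hKi : IsCompact (tsupport (Fs i)) :=
    hK.of_isClosed_subset isClosed_closure (hFs_tsupp i)
  exact lop_continuous_of_chart (hFs_cont i) hKi (hWU _ (hbK hbi)) (hWopen _ (hbK hbi))
    (hWimg _ (hbK hbi)) (hinj _ (hbK hbi)) (hcont _ (hbK hbi)) (hop _ (hbK hbi))
    (hFs_tsuppW i)

end Aux

/-- Let `V ⊆ X` be an open σ-invariant set, `f 0, …, f (n-1), g 0, …, g (n-1) ∈ C_c(U)`,
and assume that for some index `i` either `f i ∈ C_0(V)` or `g i ∈ C_0(V)`.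
Define `hs 0 = 1` and `hs (k+1) = L (conj (f k) · hs k · g k)`.  Then `hs n ∈ C_0(V)`. -/
theorem stmt_10 {X : Type*} [TopologicalSpace X] [CompactSpace X] [T2Space X]
    (U : Set X) (hU : IsOpen U) (σ : X → X) (hσ : IsLocalHomeo σ U)
    (V : Set X) (hV : IsOpen V) (hVinv : σ '' (V ∩ U) ⊆ V)
    (n : ℕ) (f g : ℕ → X → ℂ)
    (hf : ∀ k < n, MemCc U (f k)) (hg : ∀ k < n, MemCc U (g k))
    (hi : ∃ i < n, MemC0 V (f i) ∨ MemC0 V (g i))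
    (hs : ℕ → X → ℂ) (hs0 : hs 0 = fun _ => 1)
    (hsk : ∀ k < n,
      hs (k + 1) = Lop σ U (fun y => (starRingEnd ℂ) (f k y) * hs k y * g k y)) :
    MemC0 V (hs n) := by
  classical
  -- the product function is in `C_c(U)` whenever `hs k` is continuous
  have hMem : ∀ k < n, Continuous (hs k) →
      MemCc U (fun y => (starRingEnd ℂ) (f k y) * hs k y * g k y) := by
    intro k hk hck
    obtain ⟨hfc, hfK, hfU⟩ := hf k hk
    refine ⟨((Complex.continuous_conj.comp hfc).mul hck).mul (hg k hk).1, ?_, ?_⟩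
    · refine hfK.of_isClosed_subset isClosed_closure (closure_mono ?_)
      intro y hy
      simp only [Function.mem_support] at hy ⊢
      intro h
      exact hy (by simp [h])
    · refine subset_trans (closure_mono ?_) hfU
      intro y hy
      simp only [Function.mem_support] at hy ⊢
      intro h
      exact hy (by simp [h])
  -- continuity of all `hs k`, `k ≤ n`
  have hcont : ∀ k, k ≤ n → Continuous (hs k) := by
    intro k
    induction k with
    | zero => intro _; rw [hs0]; exact continuous_const
    | succ k ih =>
      intro hk
      have hk' : k < n := Nat.lt_of_succ_le hk
      rw [hsk k hk']
      exact lop_continuous hU hσ (hMem k hk' (ih (Nat.le_of_lt hk')))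
  -- vanishing off `V`
  obtain ⟨i, hin, hcase⟩ := hi
  have key : ∀ m, i < m → m ≤ n → ∀ x ∉ V, hs m x = 0 := by
    intro m
    induction m with
    | zero => intro h; exact absurd h (Nat.not_lt_zero i)
    | succ m ih =>
      intro him hmn x hx
      rw [hsk m (Nat.lt_of_succ_le hmn)]
      refine finsum_mem_of_eqOn_zero fun y hy => ?_
      obtain ⟨hyU, hyσ⟩ := hy
      have hyV : y ∉ V := fun hyV => hx (hVinv ⟨y, ⟨hyV, hyU⟩, hyσ⟩)
      by_cases him' : i = m
      · subst him'
        rcases hcase with hf0 | hg0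
        · rw [hf0.2 y hyV]; simp
        · rw [hg0.2 y hyV]; simp
      · have hlt : i < m := lt_of_le_of_ne (Nat.lt_succ_iff.mp him) him'
        rw [ih hlt (Nat.le_of_succ_le hmn) y hyV]; simp
  exact ⟨hcont n le_rfl, fun x hx => key n (Nat.lt_of_lt_of_le hin le_rfl) le_rfl x hx⟩
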